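/- Let Γ ⊆ Λ be an extension of rings such that the inclusion Γ → Λ is a split monomorphism of left Γ-modules, and suppose that Λ is flat as a left Γ-module and as a right Γ-module. Then fdd(Γ) ≥ fdd(Λ). -/

import Mathlib

/-!
Statement 11: Let `Γ ⊆ Λ` be a left-split extension of rings such that `Λ` is flat
as a left and as a right `Γ`-module.  Then `fdd(Γ) ≥ fdd(Λ)`.
-/

universe u
open MulOpposite
/-- The subgroup of "balanced relations" in `M ⊗[ℤ] X`, for `M` a right `R`-module and
`X` a left `R`-module.  The quotient of `M ⊗[ℤ] X` by this subgroup is the tensor product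
`M ⊗_R X` over the (possibly noncommutative) ring `R`. -/
def balRel (R : Type u) [Ring R] (M : Type u) [AddCommGroup M] [Module Rᵐᵒᵖ M]
    (X : Type u) [AddCommGroup X] [Module R X] : Submodule ℤ (TensorProduct ℤ M X) :=
  Submodule.span ℤ
    {z | ∃ (m : M) (r : R) (x : X), z = m ⊗ₜ[ℤ] (r • x) - ((op r) • m) ⊗ₜ[ℤ] x}

/-- Scalar multiplication `I ⊗[ℤ] F → F`, `i ⊗ v ↦ i • v`, for a right ideal `I` of `R`. -/
noncomputable def idealSmul (R : Type u) [Ring R] (F : Type u) [AddCommGroup F] [Module R F]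
    (I : Submodule Rᵐᵒᵖ R) : TensorProduct ℤ (↥I) F →ₗ[ℤ] F :=
  TensorProduct.lift (AddMonoidHom.toIntLinearMap
    { toFun := fun i => AddMonoidHom.toIntLinearMap
        { toFun := fun v => (i : R) • v
          map_zero' := smul_zero _
          map_add' := fun v w => smul_add _ _ _ }
      map_zero' := by ext v; simp
      map_add' := fun i j => by ext v; simp [add_smul] })

/-- A left module `F` over a (possibly noncommutative) ring `R` is flat if for every
finitely generated right ideal `I` of `R` the canonical map `I ⊗_R F → F` is injective.
Since `I ⊗_R F` is the quotient of `I ⊗[ℤ] F` by the balanced relations (all of which are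
killed by `idealSmul`), this injectivity says exactly that the kernel of `idealSmul`
is contained in the subgroup of balanced relations. -/
def ModFlat (R : Type u) [Ring R] (F : Type u) [AddCommGroup F] [Module R F] : Prop :=
  ∀ I : Submodule Rᵐᵒᵖ R, I.FG →
    LinearMap.ker (idealSmul R F I) ≤ balRel R (↥I) F

/-- `fddGE R n M` holds iff there is an exact sequence
`0 → M → I^0 → ⋯ → I^(n-1)` of left `R`-modules in which every `I^j` is both
flat and injective; i.e. the (left) flat-dominant dimension of `M` is at least `n`. -/
def fddGE (R : Type u) [Ring R] :
    ℕ → (M : Type u) → [AddCommGroup M] → [Module R M] → Prop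
  | 0, _, _, _ => True
  | (n+1), M, iM, mM =>
      letI := iM; letI := mM
      ∃ (I : Type u) (_ : AddCommGroup I) (_ : Module R I),
        ModFlat R I ∧ Module.Injective R I ∧
        ∃ f : M →ₗ[R] I, Function.Injective f ∧ fddGE R n (I ⧸ LinearMap.range f)
section SubringExtension

variable {Λ : Type u} [Ring Λ] (Γ : Subring Λ)

/-- `Λ` as a right `Γ`-module, i.e. as a left module over `Γᵐᵒᵖ`, for a subring `Γ ⊆ Λ`. -/
instance subringOpModule : Module (↥Γ)ᵐᵒᵖ Λ where
  smul g x := x * (g.unop : Λ)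
  one_smul x := mul_one x
  mul_smul g g' x := (mul_assoc x _ _).symm
  smul_zero g := zero_mul _
  smul_add g x y := add_mul x y _
  add_smul g g' x := by
    show x * ((unop (g + g') : ↥Γ) : Λ) = x * ((unop g : ↥Γ) : Λ) + x * ((unop g' : ↥Γ) : Λ)
    rw [unop_add, Subring.coe_add, mul_add]
  zero_smul x := by
    show x * ((unop (0 : (↥Γ)ᵐᵒᵖ) : ↥Γ) : Λ) = 0
    rw [unop_zero, ZeroMemClass.coe_zero, mul_zero]

/-- The extension `Γ ⊆ Λ` is left-split if the inclusion is a split monomorphism of left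
`Γ`-modules. -/
def IsLeftSplitExtension : Prop :=
  ∃ π : Λ →ₗ[↥Γ] ↥Γ, ∀ g : ↥Γ, π (g : Λ) = g

end SubringExtension

section MkBil
variable {A B C : Type u} [AddCommGroup A] [AddCommGroup B] [AddCommGroup C]

/-- make a ℤ-linear map out of a ℤ-tensor product from a bi-additive map -/
noncomputable def mkBil (f : A → B → C) (hA : ∀ a a' b, f (a+a') b = f a b + f a' b)
    (hB : ∀ a b b', f a (b+b') = f a b + f a b') :
    TensorProduct ℤ A B →ₗ[ℤ] C :=
  TensorProduct.lift (AddMonoidHom.toIntLinearMap (AddMonoidHom.mk'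
    (fun a => AddMonoidHom.toIntLinearMap (AddMonoidHom.mk' (f a) (hB a)))
    (fun a a' => by ext b; exact hA a a' b)))

@[simp] lemma mkBil_tmul (f : A → B → C) (hA) (hB) (a : A) (b : B) :
    mkBil f hA hB (a ⊗ₜ[ℤ] b) = f a b := rfl
end MkBil

@[simp] lemma idealSmul_tmul {R : Type u} [Ring R] {F : Type u} [AddCommGroup F] [Module R F]
    {I : Submodule Rᵐᵒᵖ R} (i : ↥I) (v : F) :
    idealSmul R F I (i ⊗ₜ[ℤ] v) = (i : R) • v := rfl

lemma fddGE_succ_iff (R : Type u) [Ring R] (n : ℕ) (M : Type u) [AddCommGroup M] [Module R M] :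
    fddGE R (n+1) M ↔ ∃ (I : Type u) (_ : AddCommGroup I) (_ : Module R I),
      ModFlat R I ∧ Module.Injective R I ∧
      ∃ f : M →ₗ[R] I, Function.Injective f ∧ fddGE R n (I ⧸ LinearMap.range f) := Iff.rfl

lemma fddGE_congr {R : Type u} [Ring R] {n : ℕ} {M N : Type u} [AddCommGroup M] [AddCommGroup N]
    [Module R M] [Module R N] (e : M ≃ₗ[R] N) (h : fddGE R n M) : fddGE R n N := by
  cases n with
  | zero => trivial
  | succ n =>
    obtain ⟨I, iI, mI, hfl, hinj, f, hf, hq⟩ := (fddGE_succ_iff R n M).1 h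
    refine (fddGE_succ_iff R n N).2 ⟨I, iI, mI, hfl, hinj, f ∘ₗ (e.symm : N →ₗ[R] M),
      hf.comp e.symm.injective, ?_⟩
    have : LinearMap.range (f ∘ₗ (e.symm : N →ₗ[R] M)) = LinearMap.range f := by
      rw [LinearMap.range_comp, LinearEquiv.range, Submodule.map_top]
    rw [this]
    exact hq

lemma fddGE_mono (R : Type u) [Ring R] :
    ∀ (n : ℕ) (M : Type u) [AddCommGroup M] [Module R M], fddGE R (n+1) M → fddGE R n M := by
  intro n
  induction n with
  | zero => intro M _ _ _; trivial
  | succ n ih =>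
    intro M _ _ h
    obtain ⟨I, iI, mI, hfl, hinj, f, hf, hq⟩ := (fddGE_succ_iff R (n+1) M).1 h
    exact (fddGE_succ_iff R n M).2 ⟨I, iI, mI, hfl, hinj, f, hf, ih _ hq⟩

section Products
variable {R : Type u} [Ring R] {F₁ F₂ : Type u} [AddCommGroup F₁] [AddCommGroup F₂]
  [Module R F₁] [Module R F₂]

lemma Injective_prod (h₁ : Module.Injective R F₁) (h₂ : Module.Injective R F₂) :
    Module.Injective R (F₁ × F₂) := by
  constructor
  intro X Y _ _ _ _ f hf g
  obtain ⟨e₁, he₁⟩ := h₁.out f hf ((LinearMap.fst R F₁ F₂) ∘ₗ g)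
  obtain ⟨e₂, he₂⟩ := h₂.out f hf ((LinearMap.snd R F₁ F₂) ∘ₗ g)
  exact ⟨e₁.prod e₂, fun x => by
    have H₁ := he₁ x; have H₂ := he₂ x
    simp only [LinearMap.comp_apply, LinearMap.fst_apply, LinearMap.snd_apply] at H₁ H₂
    simp [LinearMap.prod_apply, H₁, H₂]⟩

lemma ModFlat_prod (h₁ : ModFlat R F₁) (h₂ : ModFlat R F₂) : ModFlat R (F₁ × F₂) := by
  intro I hI z hz
  set p₁ : TensorProduct ℤ (↥I) (F₁ × F₂) →ₗ[ℤ] TensorProduct ℤ (↥I) F₁ :=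
    LinearMap.lTensor (↥I) (LinearMap.fst ℤ F₁ F₂) with hp₁
  set p₂ : TensorProduct ℤ (↥I) (F₁ × F₂) →ₗ[ℤ] TensorProduct ℤ (↥I) F₂ :=
    LinearMap.lTensor (↥I) (LinearMap.snd ℤ F₁ F₂) with hp₂
  set j₁ : TensorProduct ℤ (↥I) F₁ →ₗ[ℤ] TensorProduct ℤ (↥I) (F₁ × F₂) :=
    LinearMap.lTensor (↥I) (LinearMap.inl ℤ F₁ F₂) with hj₁
  set j₂ : TensorProduct ℤ (↥I) F₂ →ₗ[ℤ] TensorProduct ℤ (↥I) (F₁ × F₂) :=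
    LinearMap.lTensor (↥I) (LinearMap.inr ℤ F₁ F₂) with hj₂
  have hcomm₁ : (idealSmul R F₁ I) ∘ₗ p₁ =
      (LinearMap.fst ℤ F₁ F₂) ∘ₗ (idealSmul R (F₁ × F₂) I) := by
    apply TensorProduct.ext'; intro m v; rfl
  have hcomm₂ : (idealSmul R F₂ I) ∘ₗ p₂ =
      (LinearMap.snd ℤ F₁ F₂) ∘ₗ (idealSmul R (F₁ × F₂) I) := by
    apply TensorProduct.ext'; intro m v; rfl
  have hsum : j₁ (p₁ z) + j₂ (p₂ z) = z := by
    have : j₁ ∘ₗ p₁ + j₂ ∘ₗ p₂ = LinearMap.id := by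
      apply TensorProduct.ext'; intro m v
      show j₁ (p₁ (m ⊗ₜ[ℤ] v)) + j₂ (p₂ (m ⊗ₜ[ℤ] v)) = m ⊗ₜ[ℤ] v
      simp only [hp₁, hp₂, hj₁, hj₂, LinearMap.lTensor_tmul]
      show m ⊗ₜ[ℤ] ((v.1, 0) : F₁ × F₂) + m ⊗ₜ[ℤ] ((0, v.2) : F₁ × F₂) = m ⊗ₜ[ℤ] v
      rw [← TensorProduct.tmul_add]
      congr 1
      simp
    simpa using LinearMap.congr_fun this z
  have hker₁ : p₁ z ∈ LinearMap.ker (idealSmul R F₁ I) := by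
    rw [LinearMap.mem_ker]
    have := LinearMap.congr_fun hcomm₁ z
    simp only [LinearMap.comp_apply] at this
    rw [this, LinearMap.mem_ker.1 hz]; rfl
  have hker₂ : p₂ z ∈ LinearMap.ker (idealSmul R F₂ I) := by
    rw [LinearMap.mem_ker]
    have := LinearMap.congr_fun hcomm₂ z
    simp only [LinearMap.comp_apply] at this
    rw [this, LinearMap.mem_ker.1 hz]; rfl
  have hmap₁ : balRel R (↥I) F₁ ≤ (balRel R (↥I) (F₁ × F₂)).comap j₁ := by
    rw [balRel, Submodule.span_le]
    rintro w ⟨m, r, x, rfl⟩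
    simp only [Submodule.mem_comap, map_sub, hj₁, LinearMap.lTensor_tmul, LinearMap.inl_apply]
    refine Submodule.subset_span ⟨m, r, (x, 0), ?_⟩
    erw [map_sub, LinearMap.lTensor_tmul, LinearMap.lTensor_tmul]
    congr 1
    simp [Prod.smul_mk]
  have hmap₂ : balRel R (↥I) F₂ ≤ (balRel R (↥I) (F₁ × F₂)).comap j₂ := by
    rw [balRel, Submodule.span_le]
    rintro w ⟨m, r, x, rfl⟩
    simp only [Submodule.mem_comap, map_sub, hj₂, LinearMap.lTensor_tmul, LinearMap.inr_apply]
    refine Submodule.subset_span ⟨m, r, (0, x), ?_⟩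
    erw [map_sub, LinearMap.lTensor_tmul, LinearMap.lTensor_tmul]
    congr 1
    simp [Prod.smul_mk]
  rw [← hsum]
  exact Submodule.add_mem _ (hmap₁ (h₁ I hI hker₁)) (hmap₂ (h₂ I hI hker₂))

end Products

section Horseshoe
variable (R : Type u) [Ring R]

lemma fddGE_exact :
    ∀ (n : ℕ) (A B C : Type u) [AddCommGroup A] [AddCommGroup B] [AddCommGroup C]
      [Module R A] [Module R B] [Module R C]
      (i : A →ₗ[R] B) (p : B →ₗ[R] C),
      Function.Injective i → Function.Surjective p → LinearMap.ker p = LinearMap.range i →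
      fddGE R n A → fddGE R n C → fddGE R n B := by
  intro n
  induction n with
  | zero => intros; trivial
  | succ n ih =>
    intro A B C _ _ _ _ _ _ i p hi hp hex hA hC
    obtain ⟨I₁, iI₁, mI₁, hfl₁, hinj₁, fA, hfA, hqA⟩ := (fddGE_succ_iff R n A).1 hA
    obtain ⟨I₂, iI₂, mI₂, hfl₂, hinj₂, fC, hfC, hqC⟩ := (fddGE_succ_iff R n C).1 hC
    obtain ⟨g, hg⟩ := hinj₁.out i hi fA
    set h : B →ₗ[R] I₁ × I₂ := g.prod (fC ∘ₗ p) with hh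
    have hhinj : Function.Injective h := by
      intro b b' hbb
      rw [← sub_eq_zero] at hbb ⊢
      rw [← map_sub] at hbb
      set b₀ := b - b' with hb₀
      have h1f : g b₀ = 0 := congrArg Prod.fst hbb
      have h1s : fC (p b₀) = 0 := congrArg Prod.snd hbb
      have h1 : g b₀ = 0 ∧ fC (p b₀) = 0 := ⟨h1f, h1s⟩
      have h2 : p b₀ = 0 := hfC (by rw [h1.2, map_zero])
      have h3 : b₀ ∈ LinearMap.range i := hex ▸ LinearMap.mem_ker.2 h2
      obtain ⟨a, ha⟩ := h3
      have h4 : fA a = 0 := by rw [← hg a, ha, h1.1]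
      have h5 : a = 0 := hfA (by rw [h4, map_zero])
      rw [← ha, h5, map_zero]
    refine (fddGE_succ_iff R n B).2 ⟨I₁ × I₂, inferInstance, inferInstance,
      ModFlat_prod hfl₁ hfl₂, Injective_prod hinj₁ hinj₂, h, hhinj, ?_⟩
    -- the exact sequence of cokernels
    set QA := I₁ ⧸ LinearMap.range fA
    set QB := (I₁ × I₂) ⧸ LinearMap.range h
    set QC := I₂ ⧸ LinearMap.range fC
    have hsub₁ : LinearMap.range fA ≤
        LinearMap.ker ((LinearMap.range h).mkQ ∘ₗ LinearMap.inl R I₁ I₂) := by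
      rintro x ⟨a, rfl⟩
      rw [LinearMap.mem_ker, LinearMap.comp_apply, LinearMap.inl_apply,
        Submodule.mkQ_apply, Submodule.Quotient.mk_eq_zero]
      exact ⟨i a, by simp [hh, LinearMap.prod_apply, hg a, (LinearMap.mem_ker.1 :
        i a ∈ LinearMap.ker p → p (i a) = 0) (hex ▸ LinearMap.mem_range_self i a)]⟩
    set i' : QA →ₗ[R] QB :=
      Submodule.liftQ (LinearMap.range fA)
        ((LinearMap.range h).mkQ ∘ₗ LinearMap.inl R I₁ I₂) hsub₁ with hi'
    have hsub₂ : LinearMap.range h ≤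
        LinearMap.ker ((LinearMap.range fC).mkQ ∘ₗ LinearMap.snd R I₁ I₂) := by
      rintro x ⟨b, rfl⟩
      rw [LinearMap.mem_ker, LinearMap.comp_apply, LinearMap.snd_apply,
        Submodule.mkQ_apply, Submodule.Quotient.mk_eq_zero]
      exact ⟨p b, rfl⟩
    set p' : QB →ₗ[R] QC :=
      Submodule.liftQ (LinearMap.range h)
        ((LinearMap.range fC).mkQ ∘ₗ LinearMap.snd R I₁ I₂) hsub₂ with hp'
    have hi'inj : Function.Injective i' := by
      rw [injective_iff_map_eq_zero]
      intro qa hqa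
      obtain ⟨x, rfl⟩ := Submodule.Quotient.mk_surjective _ qa
      rw [hi', Submodule.liftQ_apply, LinearMap.comp_apply, LinearMap.inl_apply,
        Submodule.mkQ_apply, Submodule.Quotient.mk_eq_zero] at hqa
      obtain ⟨b, hb⟩ := hqa
      have h1 : fC (p b) = 0 := by
        have := congrArg Prod.snd hb; simpa [hh, LinearMap.prod_apply] using this
      have h2 : p b = 0 := hfC (by rw [h1, map_zero])
      obtain ⟨a, ha⟩ := hex ▸ LinearMap.mem_ker.2 h2
      have h3 : g b = x := by
        have := congrArg Prod.fst hb; simpa [hh, LinearMap.prod_apply] using this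
      rw [Submodule.Quotient.mk_eq_zero]
      exact ⟨a, by rw [← h3, ← ha, hg a]⟩
    have hp'surj : Function.Surjective p' := by
      intro qc
      obtain ⟨y, rfl⟩ := Submodule.Quotient.mk_surjective _ qc
      exact ⟨Submodule.Quotient.mk ((0 : I₁), y), by
        rw [hp']
        erw [Submodule.liftQ_apply]
        rfl⟩
    have hex' : LinearMap.ker p' = LinearMap.range i' := by
      apply le_antisymm
      · intro qb hqb
        obtain ⟨⟨x, y⟩, rfl⟩ := Submodule.Quotient.mk_surjective _ qb
        rw [LinearMap.mem_ker, hp', Submodule.liftQ_apply, LinearMap.comp_apply,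
          LinearMap.snd_apply, Submodule.mkQ_apply, Submodule.Quotient.mk_eq_zero] at hqb
        obtain ⟨c, hc⟩ := hqb
        obtain ⟨b, rfl⟩ := hp c
        refine ⟨Submodule.Quotient.mk (x - g b), ?_⟩
        rw [hi', Submodule.liftQ_apply, LinearMap.comp_apply, LinearMap.inl_apply,
          Submodule.mkQ_apply]
        rw [Submodule.Quotient.eq]
        refine ⟨-b, ?_⟩
        have : h (-b) = -(g b, fC (p b)) := by rw [map_neg]; rfl
        rw [this, hc]
        ext
        · show -(g b) = (x - g b) - x
          abel
        · show -y = 0 - y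
          abel
      · rintro qb ⟨qa, rfl⟩
        obtain ⟨x, rfl⟩ := Submodule.Quotient.mk_surjective _ qa
        rw [LinearMap.mem_ker, hi', Submodule.liftQ_apply, LinearMap.comp_apply,
          LinearMap.inl_apply, Submodule.mkQ_apply, hp', Submodule.liftQ_apply]
        simp
    exact ih QA QB QC i' p' hi'inj hp'surj hex' hqA hqC
end Horseshoe

section Summand
variable (R : Type u) [Ring R]

lemma fddGE_summand :
    ∀ (n : ℕ) (M N : Type u) [AddCommGroup M] [AddCommGroup N] [Module R M] [Module R N]
      (ι : M →ₗ[R] N) (r : N →ₗ[R] M), (∀ m, r (ι m) = m) →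
      fddGE R n N → fddGE R n M := by
  intro n
  induction n with
  | zero => intros; trivial
  | succ n ih =>
    intro M N _ _ _ _ ι r hr hN
    obtain ⟨I, iI, mI, hfl, hinj, f, hf, hq⟩ := (fddGE_succ_iff R n N).1 hN
    have hιinj : Function.Injective ι := fun m m' hmm => by
      rw [← hr m, ← hr m', hmm]
    set f' : M →ₗ[R] I := f ∘ₗ ι with hf'
    refine (fddGE_succ_iff R n M).2 ⟨I, iI, mI, hfl, hinj, f', hf.comp hιinj, ?_⟩
    -- exact sequence 0 → ker r → I ⧸ range f' → I ⧸ range f → 0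
    set K := ↥(LinearMap.ker r)
    set α : K →ₗ[R] (I ⧸ LinearMap.range f') :=
      (LinearMap.range f').mkQ ∘ₗ f ∘ₗ (LinearMap.ker r).subtype with hα
    have hrange_le : LinearMap.range f' ≤ LinearMap.range f := by
      rintro x ⟨m, rfl⟩; exact ⟨ι m, rfl⟩
    set β : (I ⧸ LinearMap.range f') →ₗ[R] (I ⧸ LinearMap.range f) :=
      Submodule.liftQ (LinearMap.range f') (LinearMap.range f).mkQ
        (fun x hx => by
          rw [LinearMap.mem_ker, Submodule.mkQ_apply, Submodule.Quotient.mk_eq_zero]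
          exact hrange_le hx) with hβ
    have hαinj : Function.Injective α := by
      rw [injective_iff_map_eq_zero]
      rintro ⟨x, hx⟩ hx0
      rw [hα, LinearMap.comp_apply, LinearMap.comp_apply, Submodule.mkQ_apply,
        Submodule.Quotient.mk_eq_zero] at hx0
      obtain ⟨m, hm⟩ := hx0
      have h1 : x = ι m := hf hm.symm
      have h2 : m = 0 := by rw [← hr m, ← h1]; exact hx
      ext
      show x = 0
      rw [h1, h2, map_zero]
    have hβsurj : Function.Surjective β := by
      intro qc
      obtain ⟨y, rfl⟩ := Submodule.Quotient.mk_surjective _ qc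
      exact ⟨Submodule.Quotient.mk y, by rw [hβ]; erw [Submodule.liftQ_apply]; rfl⟩
    have hexαβ : LinearMap.ker β = LinearMap.range α := by
      apply le_antisymm
      · intro qb hqb
        obtain ⟨x, rfl⟩ := Submodule.Quotient.mk_surjective _ qb
        rw [LinearMap.mem_ker, hβ, Submodule.liftQ_apply, Submodule.mkQ_apply,
          Submodule.Quotient.mk_eq_zero] at hqb
        obtain ⟨m, hm⟩ := hqb
        refine ⟨⟨m - ι (r m), by rw [LinearMap.mem_ker, map_sub, hr, sub_self]⟩, ?_⟩
        rw [hα, LinearMap.comp_apply, LinearMap.comp_apply]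
        show Submodule.Quotient.mk (f (m - ι (r m))) = Submodule.Quotient.mk x
        rw [Submodule.Quotient.eq]
        refine ⟨-(r m), ?_⟩
        rw [hf', ← hm, map_neg, LinearMap.comp_apply, map_sub]
        abel
      · rintro qb ⟨⟨x, hx⟩, rfl⟩
        rw [LinearMap.mem_ker, hα, LinearMap.comp_apply, LinearMap.comp_apply,
          Submodule.mkQ_apply, hβ, Submodule.liftQ_apply, Submodule.mkQ_apply,
          Submodule.Quotient.mk_eq_zero]
        exact ⟨x, rfl⟩
    -- ker r is itself a summand of N
    have hKsummand : fddGE R n K := by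
      refine ih K N ((LinearMap.ker r).subtype)
        (LinearMap.codRestrict (LinearMap.ker r) (LinearMap.id - ι ∘ₗ r)
          (fun n => by simp [hr])) (fun k => ?_) (fddGE_mono R n N hN)
      ext
      obtain ⟨x, hx⟩ := k
      show x - ι (r x) = x
      rw [hx, map_zero, sub_zero]
    exact fddGE_exact R n K (I ⧸ LinearMap.range f') (I ⧸ LinearMap.range f) α β hαinj hβsurj hexαβ hKsummand hq
end Summand

section OpIdeal
variable {Λ : Type u} [Ring Λ] (Γ : Subring Λ)

/-- transfer a left ideal of `Γ` to a "right ideal" of `Γᵐᵒᵖ`. -/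
def opIdeal (J : Submodule ↥Γ ↥Γ) : Submodule ((↥Γ)ᵐᵒᵖ)ᵐᵒᵖ ((↥Γ)ᵐᵒᵖ) where
  carrier := {x | x.unop ∈ J}
  add_mem' := fun {a b} ha hb => by
    simp only [Set.mem_setOf_eq, unop_add] at *
    exact J.add_mem ha hb
  zero_mem' := by simp
  smul_mem' := by
    intro c x hx
    show (c • x).unop ∈ J
    have h1 : (c • x).unop = c.unop.unop * x.unop := rfl
    rw [h1]
    exact J.smul_mem _ hx

lemma mem_opIdeal {J : Submodule ↥Γ ↥Γ} {x : (↥Γ)ᵐᵒᵖ} : x ∈ opIdeal Γ J ↔ x.unop ∈ J := Iff.rfl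

lemma opIdeal_fg {J : Submodule ↥Γ ↥Γ} (h : J.FG) : (opIdeal Γ J).FG := by
  classical
  obtain ⟨S, hS⟩ := h
  refine ⟨S.image op, le_antisymm ?_ ?_⟩
  · rw [Submodule.span_le]
    intro x hx
    simp only [Finset.coe_image, Set.mem_image, Finset.mem_coe] at hx
    obtain ⟨s, hs, rfl⟩ := hx
    exact mem_opIdeal Γ |>.2 (by rw [unop_op, ← hS]; exact Submodule.subset_span hs)
  · intro x hx
    have hx' : x.unop ∈ Submodule.span ↥Γ ↑S := by rw [hS]; exact (mem_opIdeal Γ).1 hx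
    have key : ∀ γ ∈ Submodule.span ↥Γ (↑S : Set ↥Γ),
        op γ ∈ Submodule.span ((↥Γ)ᵐᵒᵖ)ᵐᵒᵖ ↑(S.image op) := by
      intro γ hγ
      induction hγ using Submodule.span_induction with
      | mem γ hγ =>
        exact Submodule.subset_span (by
          simp only [Finset.coe_image, Set.mem_image, Finset.mem_coe]
          exact ⟨γ, hγ, rfl⟩)
      | zero => simp
      | add a b _ _ ha hb => rw [op_add]; exact Submodule.add_mem _ ha hb
      | smul c γ _ hγ =>
        have : op (c • γ) = (op (op c)) • (op γ) := rfl
        rw [this]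
        exact Submodule.smul_mem _ _ hγ
    have := key x.unop hx'
    rwa [op_unop] at this
end OpIdeal

section KeySum
variable {Λ : Type u} [Ring Λ] (Γ : Subring Λ)

set_option synthInstance.maxHeartbeats 1000000 in
set_option maxHeartbeats 1000000 in
lemma key_sum (hrightflat : ModFlat (↥Γ)ᵐᵒᵖ Λ) (Q : Type u) [AddCommGroup Q] [Module Λ Q]
    (I : Submodule ↥Γ ↥Γ) (g : ↥I →ₗ[↥Γ] Q) {α : Type u} (s : Finset α)
    (lam : α → Λ) (j : α → ↥I)
    (h0 : ∑ a ∈ s, lam a * ((j a : ↥Γ) : Λ) = 0) :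
    ∑ a ∈ s, lam a • g (j a) = 0 := by
  classical
  set J₀ : Submodule ↥Γ ↥Γ := Submodule.span ↥Γ ((fun a => (j a : ↥Γ)) '' ↑s) with hJ₀
  have hJ₀fg : J₀.FG := ⟨s.image (fun a => (j a : ↥Γ)), by rw [Finset.coe_image]⟩
  have hJ₀I : J₀ ≤ I := Submodule.span_le.2 (by rintro x ⟨a, ha, rfl⟩; exact (j a).2)
  set J' := opIdeal Γ J₀ with hJ'
  have hJ'fg : J'.FG := opIdeal_fg Γ hJ₀fg
  have hmem : ∀ m : ↥J', ((m : (↥Γ)ᵐᵒᵖ).unop : ↥Γ) ∈ I := fun m => hJ₀I ((mem_opIdeal Γ).1 m.2)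
  -- the auxiliary pairing
  set φ : TensorProduct ℤ (↥J') Λ →ₗ[ℤ] Q :=
    mkBil (fun m v => v • g ⟨(m : (↥Γ)ᵐᵒᵖ).unop, hmem m⟩)
      (fun m m' v => by
        beta_reduce
        have h1 : (⟨((m + m' : ↥J') : (↥Γ)ᵐᵒᵖ).unop, hmem (m+m')⟩ : ↥I)
            = ⟨(m : (↥Γ)ᵐᵒᵖ).unop, hmem m⟩ + ⟨(m' : (↥Γ)ᵐᵒᵖ).unop, hmem m'⟩ := rfl
        rw [h1, map_add, smul_add])
      (fun m v v' => by beta_reduce; rw [add_smul]) with hφ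
  -- φ kills balanced relations
  have hφbal : ∀ w ∈ balRel (↥Γ)ᵐᵒᵖ (↥J') Λ, φ w = 0 := by
    intro w hw
    refine (Submodule.span_le.2 ?_ : balRel (↥Γ)ᵐᵒᵖ (↥J') Λ ≤ LinearMap.ker φ) hw
    rintro w ⟨m, r, x, rfl⟩
    rw [SetLike.mem_coe, LinearMap.mem_ker, map_sub, hφ, mkBil_tmul, mkBil_tmul]
    have e1 : (r • x : Λ) = x * ((r.unop : ↥Γ) : Λ) := rfl
    have e2 : (⟨((op r • m : ↥J') : (↥Γ)ᵐᵒᵖ).unop, hmem _⟩ : ↥I)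
        = r.unop • ⟨(m : (↥Γ)ᵐᵒᵖ).unop, hmem m⟩ := rfl
    rw [e1, e2, map_smul, mul_smul]
    have e3 : (((r.unop : ↥Γ) : Λ)) • g ⟨(m : (↥Γ)ᵐᵒᵖ).unop, hmem m⟩
        = r.unop • g ⟨(m : (↥Γ)ᵐᵒᵖ).unop, hmem m⟩ := rfl
    rw [e3, sub_self]
  -- the kernel element
  have hmm : ∀ a : {x // x ∈ s}, op (j a.1 : ↥Γ) ∈ J' := fun a => (mem_opIdeal Γ).2 (by
    rw [unop_op, hJ₀]
    exact Submodule.subset_span ⟨a.1, a.2, rfl⟩)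
  set mz : {x // x ∈ s} → ↥J' := fun a => ⟨op (j a.1 : ↥Γ), hmm a⟩ with hmz
  set z : TensorProduct ℤ (↥J') Λ := ∑ a ∈ s.attach, (mz a) ⊗ₜ[ℤ] lam a.1 with hz
  have hz0 : idealSmul (↥Γ)ᵐᵒᵖ Λ J' z = 0 := by
    rw [hz, map_sum]
    have h1 : ∀ a : {x // x ∈ s}, idealSmul (↥Γ)ᵐᵒᵖ Λ J' ((mz a) ⊗ₜ[ℤ] lam a.1)
        = lam a.1 * ((j a.1 : ↥Γ) : Λ) := fun a => rfl
    rw [Finset.sum_congr rfl (fun a _ => h1 a), Finset.sum_attach s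
      (fun a => lam a * ((j a : ↥Γ) : Λ)), h0]
  have hzbal : z ∈ balRel (↥Γ)ᵐᵒᵖ (↥J') Λ :=
    hrightflat J' hJ'fg (LinearMap.mem_ker.2 hz0)
  have hφz : φ z = 0 := hφbal z hzbal
  rw [hz, map_sum] at hφz
  have h2 : ∀ a : {x // x ∈ s}, φ ((mz a) ⊗ₜ[ℤ] lam a.1) = lam a.1 • g (j a.1) := fun a => rfl
  rw [Finset.sum_congr rfl (fun a _ => h2 a), Finset.sum_attach s
    (fun a => lam a • g (j a))] at hφz
  exact hφz
end KeySum

section InjRes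
variable {Λ : Type u} [Ring Λ] (Γ : Subring Λ)

set_option synthInstance.maxHeartbeats 1000000 in
set_option maxHeartbeats 1000000 in
lemma injective_res (hrightflat : ModFlat (↥Γ)ᵐᵒᵖ Λ) (Q : Type u) [AddCommGroup Q] [Module Λ Q]
    (hQ : Module.Injective Λ Q) : Module.Injective ↥Γ Q := by
  classical
  apply Module.Baer.injective
  intro I g
  set pt : ↥I → Λ × Q := fun j => (((j : ↥Γ) : Λ), g j) with hpt
  set Φ : (↥I →₀ Λ) →ₗ[Λ] Λ × Q :=
    Finsupp.lsum ℕ (fun j => LinearMap.toSpanSingleton Λ (Λ × Q) (pt j)) with hΦ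
  set T := LinearMap.range Φ with hT
  have hfst : ∀ c : ↥I →₀ Λ, (Φ c).1 = ∑ a ∈ c.support, c a * ((a : ↥Γ) : Λ) := by
    intro c
    rw [hΦ, Finsupp.lsum_apply, Finsupp.sum, Prod.fst_sum]
    exact Finset.sum_congr rfl (fun a _ => rfl)
  have hsnd : ∀ c : ↥I →₀ Λ, (Φ c).2 = ∑ a ∈ c.support, c a • g a := by
    intro c
    rw [hΦ, Finsupp.lsum_apply, Finsupp.sum, Prod.snd_sum]
    exact Finset.sum_congr rfl (fun a _ => rfl)
  have hT1 : ∀ w : ↥T, (w : Λ × Q).1 = 0 → (w : Λ × Q).2 = 0 := by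
    rintro ⟨w, c, rfl⟩ h1
    show (Φ c).2 = 0
    rw [hsnd]
    rw [hfst] at h1
    exact key_sum Γ hrightflat Q I g c.support (fun a => c a) (fun a => a) h1
  set fT : ↥T →ₗ[Λ] Λ := (LinearMap.fst Λ Λ Q) ∘ₗ T.subtype with hfT
  have hfTinj : Function.Injective fT := by
    rw [injective_iff_map_eq_zero]
    intro w hw
    have h2 := hT1 w hw
    ext : 1
    exact Prod.ext hw h2
  obtain ⟨h, hh⟩ := hQ.out fT hfTinj ((LinearMap.snd Λ Λ Q) ∘ₗ T.subtype)
  refine ⟨{ toFun := fun γ => h ((γ : Λ))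
            map_add' := fun γ δ => by
              show h ((γ + δ : ↥Γ) : Λ) = h (γ : Λ) + h (δ : Λ)
              rw [Subring.coe_add, map_add]
            map_smul' := fun c γ => by
              show h ((c • γ : ↥Γ) : Λ) = c • h (γ : Λ)
              rw [show ((c • γ : ↥Γ) : Λ) = (c : Λ) * (γ : Λ) from rfl,
                show (c : Λ) * (γ : Λ) = (c : Λ) • (γ : Λ) from rfl, map_smul]
              rfl }, ?_⟩
  intro x hx
  have hmemT : (((x : Λ)), g ⟨x, hx⟩) ∈ T := by
    refine ⟨Finsupp.single ⟨x, hx⟩ 1, ?_⟩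
    rw [hΦ, Finsupp.lsum_apply, Finsupp.sum_single_index]
    · rw [LinearMap.toSpanSingleton_apply, one_smul]
    · rw [map_zero]
  have := hh ⟨_, hmemT⟩
  exact this
end InjRes

section FlatRes
variable {Λ : Type u} [Ring Λ] (Γ : Subring Λ)

/-- right multiplication as a `ℤ`-linear map -/
noncomputable def mulRightZ (μ : Λ) : Λ →ₗ[ℤ] Λ :=
  (AddMonoidHom.mk' (fun x => x * μ) (fun x y => add_mul x y μ)).toIntLinearMap

@[simp] lemma mulRightZ_apply (μ x : Λ) : mulRightZ μ x = x * μ := rfl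

set_option synthInstance.maxHeartbeats 1000000 in
set_option maxHeartbeats 2000000 in
lemma modflat_res (hleftflat : ModFlat ↥Γ Λ) (F : Type u) [AddCommGroup F] [Module Λ F]
    (hF : ModFlat Λ F) : ModFlat ↥Γ F := by
  classical
  intro J hJfg z hz
  -- the right ideal of Λ generated by J
  set J' : Submodule Λᵐᵒᵖ Λ := Submodule.span Λᵐᵒᵖ ((fun γ : ↥Γ => (γ : Λ)) '' (J : Set ↥Γ))
    with hJ'
  have hJmem : ∀ i : ↥J, ((i : ↥Γ) : Λ) ∈ J' := fun i =>
    Submodule.subset_span ⟨(i : ↥Γ), i.2, rfl⟩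
  have hJ'fg : J'.FG := by
    obtain ⟨S, hS⟩ := hJfg
    refine ⟨S.image (fun γ : ↥Γ => (γ : Λ)), le_antisymm ?_ ?_⟩
    · rw [Submodule.span_le]
      intro x hx
      simp only [Finset.coe_image, Set.mem_image, Finset.mem_coe] at hx
      obtain ⟨s, hs, rfl⟩ := hx
      exact Submodule.subset_span ⟨s, by rw [← hS]; exact Submodule.subset_span hs, rfl⟩
    · have key : ∀ γ ∈ J, ((γ : ↥Γ) : Λ) ∈
          Submodule.span Λᵐᵒᵖ ↑(S.image (fun γ : ↥Γ => (γ : Λ))) := by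
        intro γ hγ
        rw [← hS] at hγ
        induction hγ using Submodule.span_induction with
        | mem γ hγ => exact Submodule.subset_span (by
            simp only [Finset.coe_image, Set.mem_image, Finset.mem_coe]
            exact ⟨γ, hγ, rfl⟩)
        | zero => simp
        | add a b _ _ ha hb =>
          rw [show ((a + b : ↥Γ) : Λ) = (a : Λ) + (b : Λ) from rfl]
          exact Submodule.add_mem _ ha hb
        | smul c γ _ hγ =>
          rw [show ((c • γ : ↥Γ) : Λ) = (op ((c.unop : ↥Γ) : Λ)) • ((γ : ↥Γ) : Λ) from rfl]
          exact Submodule.smul_mem _ _ hγ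
      rw [hJ', Submodule.span_le]
      rintro x ⟨γ, hγ, rfl⟩
      exact key γ hγ
  -- σ : J ⊗ Λ → J'
  set σ : TensorProduct ℤ (↥J) Λ →ₗ[ℤ] ↥J' :=
    mkBil (fun i lam => (⟨((i : ↥Γ) : Λ) * lam, by
        rw [show ((i : ↥Γ) : Λ) * lam = (op lam) • ((i : ↥Γ) : Λ) from rfl]
        exact Submodule.smul_mem _ _ (hJmem i)⟩ : ↥J'))
      (fun i i' lam => by
        beta_reduce
        ext
        show (((i + i' : ↥J) : ↥Γ) : Λ) * lam = ((i : ↥Γ) : Λ) * lam + ((i' : ↥Γ) : Λ) * lam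
        rw [show (((i + i' : ↥J) : ↥Γ) : Λ) = ((i : ↥Γ) : Λ) + ((i' : ↥Γ) : Λ) from rfl, add_mul])
      (fun i lam lam' => by
        beta_reduce
        ext
        show ((i : ↥Γ) : Λ) * (lam + lam') = ((i : ↥Γ) : Λ) * lam + ((i : ↥Γ) : Λ) * lam'
        rw [mul_add]) with hσ
  have hσtmul : ∀ (i : ↥J) (lam : Λ), ((σ (i ⊗ₜ[ℤ] lam) : ↥J') : Λ) = ((i : ↥Γ) : Λ) * lam :=
    fun i lam => rfl
  have hσcoe : ∀ t, ((σ t : ↥J') : Λ) = idealSmul ↥Γ Λ J t := by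
    have : ((J'.subtype).toAddMonoidHom.toIntLinearMap) ∘ₗ σ = idealSmul ↥Γ Λ J := by
      apply TensorProduct.ext'
      intro i lam
      rfl
    intro t
    exact LinearMap.congr_fun this t
  have hσmul : ∀ (μ : Λ) (t), ((σ (LinearMap.lTensor (↥J) (mulRightZ μ) t) : ↥J') : Λ)
      = ((σ t : ↥J') : Λ) * μ := by
    intro μ
    have : ((J'.subtype).toAddMonoidHom.toIntLinearMap) ∘ₗ σ ∘ₗ LinearMap.lTensor (↥J) (mulRightZ μ)
        = (mulRightZ μ) ∘ₗ ((J'.subtype).toAddMonoidHom.toIntLinearMap) ∘ₗ σ := by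
      apply TensorProduct.ext'
      intro i lam
      show ((i : ↥Γ) : Λ) * (lam * μ) = (((i : ↥Γ) : Λ) * lam) * μ
      rw [mul_assoc]
    intro t
    exact LinearMap.congr_fun this t
  have hσsurj : Function.Surjective σ := by
    intro w
    have key : ∀ x ∈ J', ∃ t, ((σ t : ↥J') : Λ) = x := by
      intro x hx
      induction hx using Submodule.span_induction with
      | mem x hxx =>
        obtain ⟨γ, hγ, rfl⟩ := hxx
        exact ⟨(⟨γ, hγ⟩ : ↥J) ⊗ₜ[ℤ] (1 : Λ), by rw [hσtmul]; exact mul_one _⟩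
      | zero => exact ⟨0, by rw [map_zero]; rfl⟩
      | add a b _ _ ha hb =>
        obtain ⟨t, ht⟩ := ha
        obtain ⟨t', ht'⟩ := hb
        refine ⟨t + t', ?_⟩
        rw [map_add]
        show ((σ t : ↥J') : Λ) + ((σ t' : ↥J') : Λ) = a + b
        rw [ht, ht']
      | smul c x _ hx =>
        obtain ⟨t, ht⟩ := hx
        refine ⟨LinearMap.lTensor (↥J) (mulRightZ c.unop) t, ?_⟩
        rw [hσmul, ht]
        rfl
    obtain ⟨t, ht⟩ := key (w : Λ) w.2
    exact ⟨t, Subtype.ext ht⟩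
  -- the pairing Θ into the Γ-tensor quotient
  set QQ := (TensorProduct ℤ (↥J) F) ⧸ (balRel ↥Γ (↥J) F) with hQQ
  set mkQQ : TensorProduct ℤ (↥J) F →ₗ[ℤ] QQ := (balRel ↥Γ (↥J) F).mkQ with hmkQQ
  set η : TensorProduct ℤ (↥J) Λ →ₗ[ℤ] (F →ₗ[ℤ] QQ) :=
    mkBil (fun i lam => mkQQ ∘ₗ ((AddMonoidHom.mk' (fun v : F => i ⊗ₜ[ℤ] (lam • v))
        (fun v w => by beta_reduce; rw [smul_add, TensorProduct.tmul_add])).toIntLinearMap))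
      (fun i i' lam => by
        beta_reduce
        ext v
        show mkQQ ((i + i') ⊗ₜ[ℤ] (lam • v)) = mkQQ (i ⊗ₜ[ℤ] (lam • v)) + mkQQ (i' ⊗ₜ[ℤ] (lam • v))
        rw [TensorProduct.add_tmul, map_add]
      )
      (fun i lam lam' => by
        beta_reduce
        ext v
        show mkQQ (i ⊗ₜ[ℤ] ((lam + lam') • v)) = mkQQ (i ⊗ₜ[ℤ] (lam • v)) + mkQQ (i ⊗ₜ[ℤ] (lam' • v))
        rw [add_smul, TensorProduct.tmul_add, map_add]
      ) with hη
  set Θ : TensorProduct ℤ (TensorProduct ℤ (↥J) Λ) F →ₗ[ℤ] QQ := TensorProduct.lift η with hΘ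
  have hΘtmul : ∀ (i : ↥J) (lam : Λ) (v : F),
      Θ ((i ⊗ₜ[ℤ] lam) ⊗ₜ[ℤ] v) = mkQQ (i ⊗ₜ[ℤ] (lam • v)) := fun i lam v => rfl
  -- (C)
  have hC : ∀ (μ : Λ) (v : F) (t), Θ ((LinearMap.lTensor (↥J) (mulRightZ μ) t) ⊗ₜ[ℤ] v)
      = Θ (t ⊗ₜ[ℤ] (μ • v)) := by
    intro μ v
    have : (η.flip v) ∘ₗ LinearMap.lTensor (↥J) (mulRightZ μ) = η.flip (μ • v) := by
      apply TensorProduct.ext'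
      intro i lam
      show mkQQ (i ⊗ₜ[ℤ] ((lam * μ) • v)) = mkQQ (i ⊗ₜ[ℤ] (lam • (μ • v)))
      rw [mul_smul]
    intro t
    exact LinearMap.congr_fun this t
  -- (B)
  have hbalΛ : ∀ k ∈ balRel ↥Γ (↥J) Λ, ∀ v : F, Θ (k ⊗ₜ[ℤ] v) = 0 := by
    intro k hk
    induction hk using Submodule.span_induction with
    | mem k hkk =>
      obtain ⟨i, γ, lam, rfl⟩ := hkk
      intro v
      rw [TensorProduct.sub_tmul, map_sub, hΘtmul, hΘtmul]
      have e1 : ((γ • lam : Λ)) • v = γ • (lam • v) := by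
        show ((γ : Λ) * lam) • v = _
        rw [mul_smul]
        rfl
      rw [e1, sub_eq_zero]
      rw [hmkQQ]
      rw [Submodule.mkQ_apply, Submodule.mkQ_apply, Submodule.Quotient.eq]
      exact Submodule.subset_span ⟨i, γ, lam • v, rfl⟩
    | zero => intro v; rw [TensorProduct.zero_tmul, map_zero]
    | add a b _ _ ha hb =>
      intro v
      rw [TensorProduct.add_tmul, map_add, ha v, hb v, add_zero]
    | smul n k _ hk =>
      intro v
      rw [← TensorProduct.smul_tmul', map_smul, hk v, smul_zero]
  have hkerσ : ∀ t, σ t = 0 → ∀ v : F, Θ (t ⊗ₜ[ℤ] v) = 0 := by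
    intro t ht v
    have h1 : idealSmul ↥Γ Λ J t = 0 := by rw [← hσcoe, ht]; rfl
    exact hbalΛ t (hleftflat J hJfg (LinearMap.mem_ker.2 h1)) v
  have hkerΘ : ∀ y ∈ LinearMap.ker (LinearMap.rTensor F σ), Θ y = 0 := by
    intro y hy
    have hex := (rTensor_exact (R := ℤ) F (LinearMap.exact_subtype_ker_map σ) hσsurj)
    rw [hex.linearMap_ker_eq] at hy
    obtain ⟨y', rfl⟩ := hy
    have : Θ ∘ₗ LinearMap.rTensor F ((LinearMap.ker σ).subtype) = 0 := by
      apply TensorProduct.ext'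
      intro k v
      exact hkerσ (k : TensorProduct ℤ (↥J) Λ) k.2 v
    exact LinearMap.congr_fun this y'
  -- (A)
  have hAA : ∀ b ∈ balRel Λ (↥J') F, ∃ t, LinearMap.rTensor F σ t = b ∧ Θ t = 0 := by
    intro b hb
    induction hb using Submodule.span_induction with
    | mem b hbb =>
      obtain ⟨m, lam, v, rfl⟩ := hbb
      obtain ⟨s, rfl⟩ := hσsurj m
      refine ⟨s ⊗ₜ[ℤ] (lam • v) - (LinearMap.lTensor (↥J) (mulRightZ lam) s) ⊗ₜ[ℤ] v, ?_, ?_⟩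
      · rw [map_sub, LinearMap.rTensor_tmul, LinearMap.rTensor_tmul]
        congr 2
        ext
        rw [hσmul]
        rfl
      · rw [map_sub, hC, sub_self]
    | zero => exact ⟨0, by rw [map_zero], by rw [map_zero]⟩
    | add a b _ _ ha hb =>
      obtain ⟨t, ht1, ht2⟩ := ha; obtain ⟨t', ht1', ht2'⟩ := hb
      exact ⟨t + t', by rw [map_add, ht1, ht1'], by rw [map_add, ht2, ht2', add_zero]⟩
    | smul n b _ hb =>
      obtain ⟨t, ht1, ht2⟩ := hb
      exact ⟨n • t, by rw [map_smul, ht1], by rw [map_smul, ht2, smul_zero]⟩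
  -- assemble
  set τ : ↥J →ₗ[ℤ] TensorProduct ℤ (↥J) Λ :=
    (AddMonoidHom.mk' (fun i : ↥J => i ⊗ₜ[ℤ] (1 : Λ))
      (fun i i' => by beta_reduce; rw [TensorProduct.add_tmul])).toIntLinearMap with hτ
  set t₀ := LinearMap.rTensor F τ z with ht₀
  set w := LinearMap.rTensor F σ t₀ with hw
  have hwker : idealSmul Λ F J' w = 0 := by
    have : (idealSmul Λ F J') ∘ₗ (LinearMap.rTensor F σ) ∘ₗ (LinearMap.rTensor F τ)
        = idealSmul ↥Γ F J := by
      apply TensorProduct.ext'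
      intro i v
      show ((((i : ↥Γ) : Λ) * 1)) • v = (i : ↥Γ) • v
      rw [mul_one]
      rfl
    rw [hw, ht₀]
    have h2 := LinearMap.congr_fun this z
    simp only [LinearMap.comp_apply] at h2
    exact h2.trans (LinearMap.mem_ker.1 hz)
  have hwbal : w ∈ balRel Λ (↥J') F := hF J' hJ'fg (LinearMap.mem_ker.2 hwker)
  obtain ⟨t₁, ht₁, hΘt₁⟩ := hAA w hwbal
  have hΘt₀ : Θ t₀ = 0 := by
    have hdiff : Θ t₀ - Θ t₁ = 0 := by
      rw [← map_sub]
      exact hkerΘ _ (LinearMap.mem_ker.2 (by rw [map_sub, ht₁, ← hw, sub_self]))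
    rw [sub_eq_zero.1 hdiff, hΘt₁]
  have hL2 : Θ t₀ = mkQQ z := by
    have : Θ ∘ₗ LinearMap.rTensor F τ = mkQQ := by
      apply TensorProduct.ext'
      intro i v
      show mkQQ (i ⊗ₜ[ℤ] ((1 : Λ) • v)) = mkQQ (i ⊗ₜ[ℤ] v)
      rw [one_smul]
    rw [ht₀]
    exact LinearMap.congr_fun this z
  have : mkQQ z = 0 := by rw [← hL2, hΘt₀]
  rwa [hmkQQ, Submodule.mkQ_apply, Submodule.Quotient.mk_eq_zero] at this
end FlatRes

section Res
variable {Λ : Type u} [Ring Λ] (Γ : Subring Λ)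

set_option synthInstance.maxHeartbeats 1000000 in
set_option maxHeartbeats 1000000 in
lemma fddGE_res (hleftflat : ModFlat ↥Γ Λ) (hrightflat : ModFlat (↥Γ)ᵐᵒᵖ Λ) :
    ∀ (n : ℕ) (M : Type u) [AddCommGroup M] [Module Λ M],
      fddGE Λ n M → fddGE ↥Γ n M := by
  intro n
  induction n with
  | zero => intros; trivial
  | succ n ih =>
    intro M _ _ h
    obtain ⟨I, iI, mI, hfl, hinj, f, hf, hq⟩ := (fddGE_succ_iff Λ n M).1 h
    letI := iI; letI := mI
    set f' : M →ₗ[↥Γ] I :=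
      { toFun := f
        map_add' := f.map_add
        map_smul' := fun γ m => by
          show f ((γ : Λ) • m) = (γ : Λ) • f m
          exact f.map_smul _ _ } with hf'
    refine (fddGE_succ_iff ↥Γ n M).2 ⟨I, iI, inferInstance,
      modflat_res Γ hleftflat I hfl, injective_res Γ hrightflat I hinj, f', hf, ?_⟩
    -- identify the two quotients
    set mkres : I →ₗ[↥Γ] (I ⧸ LinearMap.range f) :=
      { toFun := Submodule.Quotient.mk
        map_add' := fun x y => by rw [Submodule.Quotient.mk_add]
        map_smul' := fun γ x => rfl } with hmkres
    have hcond : LinearMap.range f' ≤ LinearMap.ker mkres := by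
      rintro x ⟨m, rfl⟩
      show Submodule.Quotient.mk (f m) = 0
      rw [Submodule.Quotient.mk_eq_zero]
      exact ⟨m, rfl⟩
    set φ : (I ⧸ LinearMap.range f') →ₗ[↥Γ] (I ⧸ LinearMap.range f) :=
      Submodule.liftQ (LinearMap.range f') mkres hcond with hφ
    have hφbij : Function.Bijective φ := by
      constructor
      · rw [injective_iff_map_eq_zero]
        intro qx hqx
        obtain ⟨x, rfl⟩ := Submodule.Quotient.mk_surjective _ qx
        rw [hφ, Submodule.liftQ_apply] at hqx
        have h1 : x ∈ LinearMap.range f := by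
          rwa [← Submodule.Quotient.mk_eq_zero (LinearMap.range f)]
        obtain ⟨m, hm⟩ := h1
        rw [Submodule.Quotient.mk_eq_zero]
        exact ⟨m, hm⟩
      · intro y
        obtain ⟨x, rfl⟩ := Submodule.Quotient.mk_surjective _ y
        exact ⟨Submodule.Quotient.mk x, by rw [hφ, Submodule.liftQ_apply]; rfl⟩
    exact fddGE_congr (LinearEquiv.ofBijective φ hφbij).symm (ih _ hq)
end Res

set_option synthInstance.maxHeartbeats 1000000 in
set_option maxHeartbeats 1000000 in
theorem stmt11 (Λ : Type u) [Ring Λ] (Γ : Subring Λ)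
    (hsplit : IsLeftSplitExtension Γ)
    (hleftflat : ModFlat ↥Γ Λ)
    (hrightflat : ModFlat (↥Γ)ᵐᵒᵖ Λ) :
    ∀ n : ℕ, fddGE Λ n Λ → fddGE ↥Γ n ↥Γ := by
  intro n h
  obtain ⟨π, hπ⟩ := hsplit
  have h1 : fddGE ↥Γ n Λ := fddGE_res Γ hleftflat hrightflat n Λ h
  set ι : ↥Γ →ₗ[↥Γ] Λ :=
    { toFun := fun γ => (γ : Λ)
      map_add' := fun γ δ => by beta_reduce; rw [Subring.coe_add]
      map_smul' := fun γ δ => by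
        show ((γ • δ : ↥Γ) : Λ) = γ • ((δ : ↥Γ) : Λ)
        rfl } with hι
  set π' : Λ →ₗ[↥Γ] ↥Γ :=
    { toFun := π
      map_add' := π.map_add
      map_smul' := fun γ x => π.map_smul γ x } with hπ'
  exact fddGE_summand ↥Γ n ↥Γ Λ ι π' (fun g => hπ g) h1
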